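/- Let (v_N)_N be a decreasing sequence of positive functions on ℝ^d satisfying (Ω): for all N there is M ≥ N such that for all K ≥ M there exist θ ∈ (0,1) and C > 0 with v_M(x) ≤ C·v_N(x)^{1−θ}·v_K(x)^{θ} for all x. Then the double system (v_N(x)·(1+|ξ|)^{-n})_{N,n} on ℝ^{2d} satisfies condition (Q): for all N there is M ≥ N such that for all K ≥ M and all m ∈ ℕ there is k ∈ ℕ such that for every ε > 0 there is C' > 0 with v_M(x)·(1+|ξ|)^m ≤ ε·v_N(x) + C'·v_K(x)·(1+|ξ|)^k for all (x,ξ) ∈ ℝ^{2d}. -/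
import Mathlib


open Real

/-- If a decreasing weight system `(v_N)_N` of positive functions on `ℝ^d` satisfies
condition (Ω), then the double weight system `(v_N(x)·(1+|ξ|)^{-n})_{N,n}` on `ℝ^{2d}`
satisfies condition (Q). -/
theorem stmt10 (d : ℕ) (v : ℕ → EuclideanSpace ℝ (Fin d) → ℝ)
    (hpos : ∀ N x, 0 < v N x)
    (hdec : ∀ N x, v (N + 1) x ≤ v N x)
    (hΩ : ∀ N : ℕ, ∃ M : ℕ, N ≤ M ∧ ∀ K : ℕ, M ≤ K →
      ∃ θ : ℝ, θ ∈ Set.Ioo (0:ℝ) 1 ∧ ∃ C : ℝ, 0 < C ∧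
        ∀ x, v M x ≤ C * (v N x) ^ (1 - θ) * (v K x) ^ θ) :
    ∀ N : ℕ, ∃ M : ℕ, N ≤ M ∧ ∀ K : ℕ, M ≤ K → ∀ m : ℕ, ∃ k : ℕ,
      ∀ ε : ℝ, 0 < ε → ∃ C' : ℝ, 0 < C' ∧
        ∀ (x ξ : EuclideanSpace ℝ (Fin d)),
          v M x * (1 + ‖ξ‖) ^ m ≤ ε * v N x + C' * v K x * (1 + ‖ξ‖) ^ k := by
  intro N
  obtain ⟨M, hNM, hM⟩ := hΩ N
  refine ⟨M, hNM, fun K hK m => ?_⟩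
  obtain ⟨θ, ⟨hθ0, hθ1⟩, C, hC, hineq⟩ := hM K hK
  refine ⟨⌈(m : ℝ) / θ⌉₊, fun ε hε => ?_⟩
  set k : ℕ := ⌈(m : ℝ) / θ⌉₊ with hk
  have hθne : θ ≠ 0 := ne_of_gt hθ0
  have hεθ : (0 : ℝ) < ε ^ (θ - 1) := Real.rpow_pos_of_pos hε _
  refine ⟨(C * ε ^ (θ - 1)) ^ (1 / θ), Real.rpow_pos_of_pos (by positivity) _, fun x ξ => ?_⟩
  set C' : ℝ := (C * ε ^ (θ - 1)) ^ (1 / θ) with hC'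
  have hC'pos : 0 < C' := Real.rpow_pos_of_pos (by positivity) _
  set b : ℝ := 1 + ‖ξ‖ with hb
  have hb1 : (1 : ℝ) ≤ b := le_add_of_nonneg_right (norm_nonneg ξ)
  have hb0 : (0 : ℝ) ≤ b := le_trans zero_le_one hb1
  set p₁ : ℝ := ε * v N x with hp₁
  set p₂ : ℝ := C' * v K x * b ^ k with hp₂
  have hp₁0 : 0 ≤ p₁ := le_of_lt (mul_pos hε (hpos N x))
  have hp₂0 : 0 ≤ p₂ := by
    have := hpos K x; positivity
  -- key exponent inequality
  have hkθ : (m : ℝ) ≤ (k : ℝ) * θ := by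
    have h1 : (m : ℝ) / θ ≤ (k : ℝ) := Nat.le_ceil _
    calc (m : ℝ) = (m : ℝ) / θ * θ := by field_simp
    _ ≤ (k : ℝ) * θ := by nlinarith
  -- compute p₁^(1-θ) * p₂^θ
  have hC'θ : C' ^ θ = C * ε ^ (θ - 1) := by
    rw [hC', ← Real.rpow_mul (by positivity), one_div_mul_cancel hθne, Real.rpow_one]
  have hbk : (b ^ k) ^ θ = b ^ ((k : ℝ) * θ) := by
    rw [← Real.rpow_natCast b k, ← Real.rpow_mul hb0]
  have hεε : ε ^ (1 - θ) * ε ^ (θ - 1) = 1 := by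
    rw [← Real.rpow_add hε]; norm_num
  have hprod : p₁ ^ (1 - θ) * p₂ ^ θ
      = C * (v N x) ^ (1 - θ) * (v K x) ^ θ * b ^ ((k : ℝ) * θ) := by
    rw [hp₁, hp₂, Real.mul_rpow (le_of_lt hε) (le_of_lt (hpos N x)),
      Real.mul_rpow (mul_nonneg (le_of_lt hC'pos) (le_of_lt (hpos K x))) (pow_nonneg hb0 k),
      Real.mul_rpow (le_of_lt hC'pos) (le_of_lt (hpos K x)), hC'θ, hbk]
    linear_combination (v N x ^ (1 - θ) * v K x ^ θ * b ^ ((k : ℝ) * θ) * C) * hεε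
  have hbm : (b : ℝ) ^ m ≤ b ^ ((k : ℝ) * θ) := by
    rw [← Real.rpow_natCast b m]
    exact Real.rpow_le_rpow_of_exponent_le hb1 hkθ
  have step1 : v M x * b ^ m ≤ C * (v N x) ^ (1 - θ) * (v K x) ^ θ * b ^ m :=
    mul_le_mul_of_nonneg_right (hineq x) (by positivity)
  have step2 : C * (v N x) ^ (1 - θ) * (v K x) ^ θ * b ^ m ≤ p₁ ^ (1 - θ) * p₂ ^ θ := by
    rw [hprod]
    have hpos' : 0 < C * (v N x) ^ (1 - θ) * (v K x) ^ θ :=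
      mul_pos (mul_pos hC (Real.rpow_pos_of_pos (hpos N x) _))
        (Real.rpow_pos_of_pos (hpos K x) _)
    exact mul_le_mul_of_nonneg_left hbm (le_of_lt hpos')
  have young : p₁ ^ (1 - θ) * p₂ ^ θ ≤ (1 - θ) * p₁ + θ * p₂ :=
    Real.geom_mean_le_arith_mean2_weighted (by linarith) (le_of_lt hθ0) hp₁0 hp₂0
      (by ring)
  have final : (1 - θ) * p₁ + θ * p₂ ≤ p₁ + p₂ := by nlinarith
  calc v M x * b ^ m ≤ p₁ ^ (1 - θ) * p₂ ^ θ := le_trans step1 step2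
  _ ≤ p₁ + p₂ := le_trans young final
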